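/- There exists a non-integralizable instance with 6 voters and only four candidates: for N = {1,…,6}, k = 2, types R_c = {{1,2,6},{4,5,6},{2,3,4},{1,3,5}} each with supply 1, the vector u = (1,1,1,1,1,1) is fractional-committee-feasible (x_R = 1/2 for all four types) but not integral-committee-feasible. -/
import Mathlib


/-- Candidate types: non-empty subsets of the voter set `Fin n`. -/
abbrev Typ (n : ℕ) := {S : Finset (Fin n) // S.Nonempty}

/-- Utility of voter `i` under an integral committee `x`. -/
def intUtil {n : ℕ} (x : Typ n → ℕ) (i : Fin n) : ℤ :=
  ∑ R : Typ n, if i ∈ R.1 then (x R : ℤ) else 0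

/-- Utility of voter `i` under a fractional committee `x`. -/
def fracUtil {n : ℕ} (x : Typ n → ℝ) (i : Fin n) : ℝ :=
  ∑ R : Typ n, if i ∈ R.1 then x R else 0

/-- `x` is an integral committee for the instance `(c, k)`. -/
def IsIntCommittee {n : ℕ} (c : Typ n → ℕ) (k : ℕ) (x : Typ n → ℕ) : Prop :=
  (∀ R, x R ≤ c R) ∧ (∑ R : Typ n, x R) ≤ k

/-- `x` is a fractional committee for the instance `(c, k)`. -/
def IsFracCommittee {n : ℕ} (c : Typ n → ℕ) (k : ℕ) (x : Typ n → ℝ) : Prop :=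
  (∀ R, 0 ≤ x R) ∧ (∀ R, x R ≤ (c R : ℝ)) ∧ (∑ R : Typ n, x R) ≤ (k : ℝ)

/-- `u` is integral-committee-feasible in `(c, k)`. -/
def IntFeasible {n : ℕ} (c : Typ n → ℕ) (k : ℕ) (u : Fin n → ℤ) : Prop :=
  ∃ x : Typ n → ℕ, IsIntCommittee c k x ∧ ∀ i, u i ≤ intUtil x i

/-- `u` is fractional-committee-feasible in `(c, k)`. -/
def FracFeasible {n : ℕ} (c : Typ n → ℕ) (k : ℕ) (u : Fin n → ℤ) : Prop :=
  ∃ x : Typ n → ℝ, IsFracCommittee c k x ∧ ∀ i, (u i : ℝ) ≤ fracUtil x i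

/-- `(c, k)` is integralizable. -/
def Integralizable {n : ℕ} (c : Typ n → ℕ) (k : ℕ) : Prop :=
  ∀ u : Fin n → ℤ, FracFeasible c k u → IntFeasible c k u

/-- The four-candidates supply vector on six voters
(types `{1,2,6}, {4,5,6}, {2,3,4}, {1,3,5}` in 1-indexed notation). -/
def cFourCandidates : Typ 6 → ℕ := fun R =>
  if R.1 = ({0, 1, 5} : Finset (Fin 6)) ∨ R.1 = ({3, 4, 5} : Finset (Fin 6)) ∨
     R.1 = ({1, 2, 3} : Finset (Fin 6)) ∨ R.1 = ({0, 2, 4} : Finset (Fin 6))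
  then 1 else 0

def T1 : Typ 6 := ⟨{0,1,5}, by decide⟩
def T2 : Typ 6 := ⟨{3,4,5}, by decide⟩
def T3 : Typ 6 := ⟨{1,2,3}, by decide⟩
def T4 : Typ 6 := ⟨{0,2,4}, by decide⟩

lemma csum : ∑ R : Typ 6, cFourCandidates R = 4 := by decide
lemma usum : ∀ i : Fin 6, ∑ R : Typ 6, (if i ∈ R.1 then cFourCandidates R else 0) = 2 := by
  decide


/-- The four-candidates instance with `n = 6`, `k = 2` is not integralizable:
`u = (1,1,1,1,1,1)` is fractional-committee-feasible but not
integral-committee-feasible. -/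
theorem stmt4 :
    FracFeasible cFourCandidates 2 (fun _ => 1) ∧
    ¬ IntFeasible cFourCandidates 2 (fun _ => 1) := by
  constructor
  · refine ⟨fun R => (cFourCandidates R : ℝ) / 2, ⟨fun R => by positivity, fun R => ?_, ?_⟩,
      fun i => ?_⟩
    · have : (0:ℝ) ≤ (cFourCandidates R : ℝ) := by positivity
      linarith
    · have : ∑ R : Typ 6, ((cFourCandidates R : ℝ) / 2)
          = ((∑ R : Typ 6, cFourCandidates R : ℕ) : ℝ) / 2 := by
        rw [← Finset.sum_div]; push_cast; ring
      rw [this, csum]; norm_num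
    · have : fracUtil (fun R => (cFourCandidates R : ℝ) / 2) i
          = ((∑ R : Typ 6, (if i ∈ R.1 then cFourCandidates R else 0) : ℕ) : ℝ) / 2 := by
        unfold fracUtil
        push_cast
        rw [Finset.sum_div]
        refine Finset.sum_congr rfl fun R _ => ?_
        split <;> simp
      rw [this, usum i]; norm_num
  · rintro ⟨x, ⟨hc, hsum⟩, hu⟩
    have hzero : ∀ R : Typ 6, R ≠ T1 → R ≠ T2 → R ≠ T3 → R ≠ T4 → x R = 0 := by
      intro R h1 h2 h3 h4
      have := hc R
      unfold cFourCandidates at this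
      rw [if_neg] at this
      · omega
      · rintro (h | h | h | h)
        · exact h1 (Subtype.ext h)
        · exact h2 (Subtype.ext h)
        · exact h3 (Subtype.ext h)
        · exact h4 (Subtype.ext h)
    have hS : ({T1, T2, T3, T4} : Finset (Typ 6)) ⊆ Finset.univ := Finset.subset_univ _
    have hutil : ∀ i : Fin 6, intUtil x i
        = ∑ R ∈ ({T1, T2, T3, T4} : Finset (Typ 6)), (if i ∈ R.1 then (x R : ℤ) else 0) := by
      intro i
      unfold intUtil
      refine (Finset.sum_subset hS fun R _ hR => ?_).symm
      simp only [Finset.mem_insert, Finset.mem_singleton, not_or] at hR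
      obtain ⟨h1, h2, h3, h4⟩ := hR
      rw [hzero R h1 h2 h3 h4]
      simp
    have hxsum : x T1 + x T2 + x T3 + x T4 ≤ 2 := by
      calc x T1 + x T2 + x T3 + x T4
          = ∑ R ∈ ({T1, T2, T3, T4} : Finset (Typ 6)), x R := by
            rw [show ({T1, T2, T3, T4} : Finset (Typ 6))
              = insert T1 (insert T2 (insert T3 {T4})) from rfl]
            rw [Finset.sum_insert (by decide), Finset.sum_insert (by decide),
              Finset.sum_insert (by decide), Finset.sum_singleton]
            ring
        _ ≤ ∑ R : Typ 6, x R := Finset.sum_le_sum_of_subset hS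
        _ ≤ 2 := hsum
    have expand : ∀ i : Fin 6,
        (∑ R ∈ ({T1, T2, T3, T4} : Finset (Typ 6)), (if i ∈ R.1 then (x R : ℤ) else 0))
        = (if i ∈ T1.1 then (x T1 : ℤ) else 0) + (if i ∈ T2.1 then (x T2 : ℤ) else 0)
          + (if i ∈ T3.1 then (x T3 : ℤ) else 0) + (if i ∈ T4.1 then (x T4 : ℤ) else 0) := by
      intro i
      rw [show ({T1, T2, T3, T4} : Finset (Typ 6))
        = insert T1 (insert T2 (insert T3 {T4})) from rfl]
      rw [Finset.sum_insert (by decide), Finset.sum_insert (by decide),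
        Finset.sum_insert (by decide), Finset.sum_singleton]
      ring
    have h0 := hu 0; have h1 := hu 1; have h2 := hu 2
    have h3 := hu 3; have h4 := hu 4; have h5 := hu 5
    rw [hutil, expand] at h0 h1 h2 h3 h4 h5
    set a := x T1 with ha
    set b := x T2 with hb
    set c := x T3 with hc'
    set d := x T4 with hd
    norm_num [T1, T2, T3, T4, Finset.mem_insert, ← ha, ← hb, ← hc', ← hd]
      at h0 h1 h2 h3 h4 h5
    omega
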